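/- A subset C ⊆ E is a minimal nonempty support of an element of W if and only if the span L of {u^{(i)} : i ∉ C} has dimension s−1 in K^s and u^{(i)} ∉ L for all i ∈ C. -/

import Mathlib

open Module Function

/-- C ⊆ E is a minimal nonempty support of an element of
W = span{φ_1,…,φ_s} (s ≥ 1) iff the span L of {u^{(i)} : i ∉ C} has
dimension s−1 in K^s and u^{(i)} ∉ L for all i ∈ C. -/
theorem stmt3 {K E : Type*} [Field K] {s : ℕ} (hs : 0 < s)
    (φ : Fin s → (E → K)) (hφ : LinearIndependent K φ)
    (u : E → (Fin s → K)) (hu : ∀ j i, u j i = φ i j)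
    (C : Set E) :
    (∃ w ∈ Submodule.span K (Set.range φ), w ≠ 0 ∧ Function.support w = C ∧
        ∀ w' ∈ Submodule.span K (Set.range φ), w' ≠ 0 →
          Function.support w' ⊆ C → Function.support w' = C) ↔
      (Module.finrank K (Submodule.span K (u '' Cᶜ)) = s - 1 ∧
        ∀ i ∈ C, u i ∉ Submodule.span K (u '' Cᶜ)) := by
  classical
  set L : Submodule K (Fin s → K) := Submodule.span K (u '' Cᶜ) with hLdef
  set B := Pi.basisFun K (Fin s) with hB
  set e : (Fin s → K) ≃ₗ[K] Module.Dual K (Fin s → K) := B.toDualEquiv with he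
  have hdot : ∀ a v : Fin s → K, e a v = ∑ i, v i * a i := by
    intro a v
    conv_lhs => rw [← B.sum_repr v]
    rw [he, Basis.toDualEquiv_apply, map_sum]
    have h1 : ∀ i : Fin s, (Pi.basisFun K (Fin s)).toDual a (Pi.single i 1) = a i := by
      intro i
      rw [← Pi.basisFun_apply, Basis.toDual_eq_repr]
      simp
    simp [hB, h1]
  set T : (Fin s → K) →ₗ[K] (E → K) := Fintype.linearCombination K φ with hT
  have hTapp : ∀ (a : Fin s → K) (j : E), T a j = e a (u j) := by
    intro a j
    rw [hdot, hT, Fintype.linearCombination_apply]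
    simp only [Finset.sum_apply, Pi.smul_apply, smul_eq_mul]
    exact Finset.sum_congr rfl fun i _ => by rw [hu, mul_comm]
  have hTrange : ∀ w : E → K, w ∈ Submodule.span K (Set.range φ) ↔ ∃ a, T a = w := by
    intro w
    rw [← Fintype.range_linearCombination K φ]
    exact ⟨fun h => h, fun h => h⟩
  have hTinj : Function.Injective T := by
    rw [← LinearMap.ker_eq_bot, LinearMap.ker_eq_bot']
    intro a ha
    funext i
    simpa using Fintype.linearIndependent_iff.mp hφ a
      (by simpa [hT, Fintype.linearCombination_apply] using ha) i
  set N : Submodule K (Fin s → K) := L.dualAnnihilator.comap e.toLinearMap with hN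
  have hmemN : ∀ a : Fin s → K, a ∈ N ↔ Function.support (T a) ⊆ C := by
    intro a
    rw [hN, Submodule.mem_comap, Submodule.mem_dualAnnihilator,
      Function.support_subset_iff']
    constructor
    · intro h j hj
      rw [hTapp]
      exact h (u j) (Submodule.subset_span ⟨j, hj, rfl⟩)
    · intro h v hv
      have hle : L ≤ LinearMap.ker (e a) := by
        rw [hLdef, Submodule.span_le]
        rintro _ ⟨j, hj, rfl⟩
        rw [SetLike.mem_coe, LinearMap.mem_ker, ← hTapp]
        exact h j hj
      exact hle hv
  have hfrN : finrank K N + finrank K L = s := by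
    have h1 : finrank K N = finrank K L.dualAnnihilator :=
      LinearEquiv.finrank_eq (LinearEquiv.ofSubmodule' e L.dualAnnihilator)
    have h2 : finrank K L.dualAnnihilator = finrank K ((Fin s → K) ⧸ L) :=
      (LinearEquiv.finrank_eq (Subspace.quotEquivAnnihilator L)).symm
    rw [h1, h2, Submodule.finrank_quotient_add_finrank]
    exact Module.finrank_fin_fun K
  constructor
  · rintro ⟨w, hwW, hw0, hwsupp, hmin⟩
    obtain ⟨a, rfl⟩ := (hTrange w).mp hwW
    have ha0 : a ≠ 0 := fun h => hw0 (by rw [h, map_zero])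
    have haN : a ∈ N := (hmemN a).mpr (hwsupp ▸ le_refl _)
    obtain ⟨i₀, hi₀⟩ : C.Nonempty := by
      rw [← hwsupp]; exact Function.support_nonempty_iff.mpr hw0
    have hwi₀ : T a i₀ ≠ 0 := by
      rw [← Function.mem_support, hwsupp]; exact hi₀
    have hnotin : ∀ i ∈ C, u i ∉ L := by
      intro i hi hmem
      have h0 : e a (u i) = 0 := by
        have := Submodule.mem_comap.mp haN
        exact (Submodule.mem_dualAnnihilator _).mp this (u i) hmem
      have : T a i ≠ 0 := by rw [← Function.mem_support, hwsupp]; exact hi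
      exact this (by rw [hTapp]; exact h0)
    refine ⟨?_, hnotin⟩
    -- show N = span {a}
    have hNle : N ≤ Submodule.span K {a} := by
      intro a' ha'
      by_cases h0 : a' = 0
      · simp [h0]
      have hsupp' : Function.support (T a') ⊆ C := (hmemN a').mp ha'
      have hw'0 : T a' ≠ 0 := fun h => h0 (hTinj (by rw [h, map_zero]))
      have hsupp'eq : Function.support (T a') = C :=
        hmin (T a') ((hTrange _).mpr ⟨a', rfl⟩) hw'0 hsupp'
      set c : K := T a' i₀ / T a i₀ with hc
      have hker : a' - c • a = 0 := by
        by_contra hne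
        have hmem'' : a' - c • a ∈ N := N.sub_mem ha' (N.smul_mem c haN)
        have hW'' : T (a' - c • a) ∈ Submodule.span K (Set.range φ) :=
          (hTrange _).mpr ⟨_, rfl⟩
        have hne'' : T (a' - c • a) ≠ 0 := fun h => hne (hTinj (by rw [h, map_zero]))
        have heqC : Function.support (T (a' - c • a)) = C :=
          hmin _ hW'' hne'' ((hmemN _).mp hmem'')
        have : T (a' - c • a) i₀ = 0 := by
          rw [map_sub, map_smul, Pi.sub_apply, Pi.smul_apply, smul_eq_mul, hc,
            div_mul_cancel₀ _ hwi₀, sub_self]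
        have hi₀mem : i₀ ∈ Function.support (T (a' - c • a)) := by rw [heqC]; exact hi₀
        exact Function.mem_support.mp hi₀mem this
      exact Submodule.mem_span_singleton.mpr ⟨c, (sub_eq_zero.mp hker).symm⟩
    have hspan_le : Submodule.span K {a} ≤ N := by
      rw [Submodule.span_le, Set.singleton_subset_iff]; exact haN
    have hNeq : N = Submodule.span K {a} := le_antisymm hNle hspan_le
    have hfr1 : finrank K N = 1 := by rw [hNeq, finrank_span_singleton ha0]
    omega
  · rintro ⟨hrank, hnotin⟩
    have hfr1 : finrank K N = 1 := by omega
    have hNbot : N ≠ ⊥ := by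
      intro h; rw [h] at hfr1; simp at hfr1
    obtain ⟨a, haN, ha0⟩ := Submodule.exists_mem_ne_zero_of_ne_bot hNbot
    have hw0 : T a ≠ 0 := fun h => ha0 (hTinj (by rw [h, map_zero]))
    have hsupp_sub : Function.support (T a) ⊆ C := (hmemN a).mp haN
    have hCsub : C ⊆ Function.support (T a) := by
      intro i hi
      rw [Function.mem_support, hTapp]
      intro h0
      -- e a vanishes on L ⊔ span {u i} which is everything
      set L' : Submodule K (Fin s → K) := L ⊔ Submodule.span K {u i} with hL'
      have hlt : L < L' := by
        rw [hL']
        refine lt_of_le_of_ne le_sup_left ?_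
        intro h
        have hmem : u i ∈ L ⊔ Submodule.span K {u i} :=
          Submodule.mem_sup_right (Submodule.mem_span_singleton_self (u i))
        rw [← h] at hmem
        exact hnotin i hi hmem
      have hfrL' : finrank K L' = s := by
        have h1 : finrank K L < finrank K L' := Submodule.finrank_lt_finrank_of_lt hlt
        have h2 : finrank K L' ≤ s := by
          have := Submodule.finrank_le L'
          rwa [Module.finrank_fin_fun K] at this
        omega
      have htop : L' = ⊤ := Submodule.eq_top_of_finrank_eq (by rw [hfrL', Module.finrank_fin_fun K])
      have hker : L' ≤ LinearMap.ker (e a) := by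
        rw [hL']
        refine sup_le ?_ ?_
        · intro v hv
          exact LinearMap.mem_ker.mpr
            ((Submodule.mem_dualAnnihilator _).mp (Submodule.mem_comap.mp haN) v hv)
        · rw [Submodule.span_le, Set.singleton_subset_iff, SetLike.mem_coe,
            LinearMap.mem_ker]
          exact h0
      have : e a = 0 := by
        apply LinearMap.ext
        intro v
        exact hker (htop ▸ Submodule.mem_top : v ∈ L')
      exact ha0 (e.injective (by rw [this, map_zero]))
    have hsupp : Function.support (T a) = C := le_antisymm hsupp_sub hCsub
    refine ⟨T a, (hTrange _).mpr ⟨a, rfl⟩, hw0, hsupp, ?_⟩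
    intro w' hw'W hw'0 hw'sub
    obtain ⟨a', rfl⟩ := (hTrange w').mp hw'W
    have ha'0 : a' ≠ 0 := fun h => hw'0 (by rw [h, map_zero])
    have ha'N : a' ∈ N := (hmemN a').mpr hw'sub
    -- N = span {a}
    have hspan_le : Submodule.span K {a} ≤ N := by
      rw [Submodule.span_le, Set.singleton_subset_iff]; exact haN
    have hNeq : N = Submodule.span K {a} :=
      (Submodule.eq_of_le_of_finrank_le hspan_le
        (by rw [hfr1, finrank_span_singleton ha0])).symm
    obtain ⟨c, rfl⟩ := Submodule.mem_span_singleton.mp (hNeq ▸ ha'N)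
    have hc0 : c ≠ 0 := fun h => ha'0 (by rw [h, zero_smul])
    rw [map_smul]
    rw [Function.support_const_smul_of_ne_zero c (T a) hc0, hsupp]
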